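/- Let k be a field of characteristic zero and let p, q ∈ k[t] be coprime polynomials with deg(q) > 0. Then gcd(p'q − pq', q²) = gcd(q, q') (up to units). -/

import Mathlib

open Polynomial

/-- In characteristic zero, the multiplicity of a prime in the derivative is strictly
smaller than its multiplicity in the polynomial (when the prime divides it). -/
theorem emultiplicity_derivative_lt {k : Type*} [Field k] [CharZero k] {r q : k[X]}
    (hr : Prime r) (hq0 : q ≠ 0) (hrq : r ∣ q) :
    emultiplicity r (derivative q) < emultiplicity r q := by
  have hfin : FiniteMultiplicity r q := FiniteMultiplicity.of_not_isUnit hr.not_unit hq0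
  set m := multiplicity r q with hm
  have hm1 : 1 ≤ m := multiplicity_pos_of_dvd hrq
  obtain ⟨s, hs, hsd⟩ := hfin.exists_eq_pow_mul_and_not_dvd
  have hirr : Irreducible r := hr.irreducible
  have hdeg : r.natDegree ≠ 0 := hirr.natDegree_pos.ne'
  have hrd0 : derivative r ≠ 0 := fun h => hdeg (natDegree_eq_zero_of_derivative_eq_zero h)
  have hnot : ¬ r ^ m ∣ derivative q := by
    intro h
    rw [hs, derivative_mul, derivative_pow] at h
    have h2 : r ^ m ∣ (↑m * r ^ (m - 1) * derivative r) * s := by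
      simpa [← hm] using h.sub (dvd_mul_right (r ^ m) (derivative s))
    have e1 : (↑m * r ^ (m - 1) * derivative r) * s
        = r ^ (m - 1) * ((↑m : k[X]) * derivative r * s) := by ring
    have e2 : r ^ m = r ^ (m - 1) * r := by
      rw [← pow_succ]; congr 1; omega
    rw [e1, e2, mul_dvd_mul_iff_left (pow_ne_zero _ hr.ne_zero)] at h2
    rcases hr.dvd_mul.mp h2 with h3 | h3
    · rcases hr.dvd_mul.mp h3 with h4 | h4
      · have hu : IsUnit ((↑m : k[X])) := by
          rw [← Polynomial.C_eq_natCast]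
          exact isUnit_C.mpr (isUnit_iff_ne_zero.mpr (Nat.cast_ne_zero.mpr (by omega)))
        exact hr.not_unit (isUnit_of_dvd_unit h4 hu)
      · have := Polynomial.natDegree_le_of_dvd h4 hrd0
        have := Polynomial.natDegree_derivative_lt hdeg
        omega
    · exact hsd h3
  calc emultiplicity r (derivative q) < (m : ℕ∞) :=
        emultiplicity_lt_iff_not_dvd.mpr hnot
    _ = emultiplicity r q := hfin.emultiplicity_eq_multiplicity.symm

theorem stmt_2 {k : Type*} [Field k] [CharZero k]
    (p q : Polynomial k) (hcop : IsCoprime p q) (hq : 0 < q.natDegree) :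
    letI : DecidableEq (Polynomial k) := Classical.decEq _
    Associated
      (EuclideanDomain.gcd (Polynomial.derivative p * q - p * Polynomial.derivative q) (q ^ 2))
      (EuclideanDomain.gcd q (Polynomial.derivative q)) := by
  letI : DecidableEq (Polynomial k) := Classical.decEq _
  letI : NormalizationMonoid (Polynomial k) := UniqueFactorizationMonoid.normalizationMonoid.toNormalizationMonoid
  have hq0 : q ≠ 0 := fun h => by simp [h] at hq
  have hq'0 : derivative q ≠ 0 := fun h => by
    have := natDegree_eq_zero_of_derivative_eq_zero h; omega
  set W : k[X] := derivative p * q - p * derivative q with hW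
  set g : k[X] := EuclideanDomain.gcd W (q ^ 2) with hg
  set d : k[X] := EuclideanDomain.gcd q (derivative q) with hd
  have hdq : d ∣ q := EuclideanDomain.gcd_dvd_left _ _
  have hdq' : d ∣ derivative q := EuclideanDomain.gcd_dvd_right _ _
  -- easy direction: d ∣ g
  have hddvd : d ∣ g := by
    apply EuclideanDomain.dvd_gcd
    · exact dvd_sub (hdq.mul_left _) (hdq'.mul_left _)
    · exact hdq.trans (dvd_pow_self q two_ne_zero)
  -- hard direction: g ∣ d
  have hgW : g ∣ W := EuclideanDomain.gcd_dvd_left _ _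
  have hgq2 : g ∣ q ^ 2 := EuclideanDomain.gcd_dvd_right _ _
  have hg0 : g ≠ 0 := fun h => by
    rw [hg, EuclideanDomain.gcd_eq_zero_iff] at h
    exact pow_ne_zero 2 hq0 h.2
  have hd0 : d ≠ 0 := fun h => by
    rw [hd, EuclideanDomain.gcd_eq_zero_iff] at h
    exact hq0 h.1
  have hgd : g ∣ d := by
    rw [UniqueFactorizationMonoid.dvd_iff_normalizedFactors_le_normalizedFactors hg0 hd0,
      Multiset.le_iff_count]
    intro r
    by_cases hrg : r ∈ UniqueFactorizationMonoid.normalizedFactors g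
    · have hirr : Irreducible r := UniqueFactorizationMonoid.irreducible_of_normalized_factor _ hrg
      have hrnorm : normalize r = r := UniqueFactorizationMonoid.normalize_normalized_factor _ hrg
      have hpr : Prime r := hirr.prime
      have hrdvdg : r ∣ g := UniqueFactorizationMonoid.dvd_of_mem_normalizedFactors hrg
      have hrq : r ∣ q := hpr.dvd_of_dvd_pow (hrdvdg.trans hgq2)
      -- r does not divide p
      have hrp : ¬ r ∣ p := fun h => hpr.not_unit (hcop.isUnit_of_dvd' h hrq)
      have hfinq : FiniteMultiplicity r q :=
        FiniteMultiplicity.of_not_isUnit hpr.not_unit hq0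
      have hfinq' : FiniteMultiplicity r (derivative q) :=
        FiniteMultiplicity.of_not_isUnit hpr.not_unit hq'0
      set m := multiplicity r q with hm
      set j := multiplicity r (derivative q) with hj
      have hjm : j < m := by
        have := emultiplicity_derivative_lt hpr hq0 hrq
        rw [hfinq.emultiplicity_eq_multiplicity, hfinq'.emultiplicity_eq_multiplicity] at this
        exact_mod_cast this
      -- emultiplicity of W equals that of p * q'
      have hmulq' : emultiplicity r (p * derivative q) = (j : ℕ∞) := by
        rw [emultiplicity_mul hpr, emultiplicity_eq_zero.mpr hrp, zero_add,
          hfinq'.emultiplicity_eq_multiplicity]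
      have hlt : emultiplicity r (p * derivative q)
          < emultiplicity r (derivative p * q) := by
        rw [hmulq']
        calc (j : ℕ∞) < (m : ℕ∞) := by exact_mod_cast hjm
          _ ≤ emultiplicity r (derivative p * q) := by
            apply le_emultiplicity_of_pow_dvd
            exact (pow_multiplicity_dvd r q).mul_left _
      have hWe : emultiplicity r W = (j : ℕ∞) := by
        rw [hW, emultiplicity_sub_of_gt hlt, hmulq']
      -- r ^ j divides d
      have hrjd : r ^ j ∣ d := by
        apply EuclideanDomain.dvd_gcd
        · exact hfinq.pow_dvd_iff_le_multiplicity.mpr hjm.le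
        · exact pow_multiplicity_dvd r (derivative q)
      have hge : emultiplicity r g ≤ emultiplicity r d :=
        calc emultiplicity r g ≤ emultiplicity r W :=
              emultiplicity_le_emultiplicity_of_dvd_right hgW
          _ = (j : ℕ∞) := hWe
          _ ≤ emultiplicity r d := le_emultiplicity_of_pow_dvd hrjd
      have hcg := UniqueFactorizationMonoid.emultiplicity_eq_count_normalizedFactors hirr hg0
      have hcd := UniqueFactorizationMonoid.emultiplicity_eq_count_normalizedFactors hirr hd0
      rw [hcg, hcd, hrnorm] at hge
      exact_mod_cast hge
    · simp [Multiset.count_eq_zero_of_notMem hrg]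
  exact associated_of_dvd_dvd hgd hddvd
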